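/- Let G be a P_5-free graph containing an induced antihole C = complement of C_{2t+1} (t ≥ 2) with vertices v_1,...,v_{2t+1} (v_i v_j ∈ E iff |i−j|>1, indices mod 2t+1). Then for each i, the set S(v_i, v_{i+1}) is complete to the set S(V(C)\{v_i, v_{i+1}}), i.e., every vertex whose neighborhood on C is exactly {v_i,v_{i+1}} is adjacent to every vertex whose neighborhood on C is exactly V(C)\{v_i,v_{i+1}}. -/

import Mathlib

open SimpleGraph

/-- `G` contains no induced subgraph isomorphic to `H`. -/
def HFree {W V : Type*} (H : SimpleGraph W) (G : SimpleGraph V) : Prop :=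
  IsEmpty (H ↪g G)

/-- `G` is `k`-vertex-critical: `χ(G) = k` and deleting any vertex decreases
the chromatic number below `k`. -/
def IsKVertexCritical {V : Type*} (G : SimpleGraph V) (k : ℕ) : Prop :=
  G.chromaticNumber = k ∧ ∀ v : V, (G.induce {v}ᶜ).chromaticNumber < k

/-- The star `K_{1,s}`: center `0`, leaves `1, …, s`. -/
def starGraph (s : ℕ) : SimpleGraph (Fin (s + 1)) :=
  SimpleGraph.fromRel (fun i _ => (i : ℕ) = 0)

/-- `K_{1,s} + P_1`: the disjoint union of the star `K_{1,s}`
(center `0`, leaves `1, …, s`) and the isolated vertex `s + 1`. -/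
def starPlusP1 (s : ℕ) : SimpleGraph (Fin (s + 2)) :=
  SimpleGraph.fromRel (fun i j => (i : ℕ) = 0 ∧ (j : ℕ) ≠ 0 ∧ (j : ℕ) ≤ s)

/-- The complement of `K_3 + 2P_1`: vertices `0,1,2` pairwise nonadjacent,
vertices `3,4` adjacent to everything else. -/
def coK3Plus2P1 : SimpleGraph (Fin 5) :=
  SimpleGraph.fromRel (fun i j => 3 ≤ (i : ℕ) ∨ 3 ≤ (j : ℕ))

open Fin.CommRing

theorem stmt14 {V : Type*} (G : SimpleGraph V) (hP5 : HFree (pathGraph 5) G)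
    (t : ℕ) (ht : 2 ≤ t) (f : ((cycleGraph (2 * t + 1))ᶜ) ↪g G)
    (i : Fin (2 * t + 1)) (u v : V)
    (hu : u ∉ Set.range f) (hu2 : ∀ j, G.Adj u (f j) ↔ (j = i ∨ j = i + 1))
    (hv : v ∉ Set.range f) (hv2 : ∀ j, G.Adj v (f j) ↔ ¬ (j = i ∨ j = i + 1)) :
    G.Adj u v := by
  by_contra huv
  have h5 : 5 ≤ 2 * t + 1 := by omega
  have hval : ∀ k : ℕ, k < 2 * t + 1 → ((k : Fin (2 * t + 1)) : ℕ) = k :=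
    fun k hk => Fin.val_cast_of_lt hk
  have hnz : ∀ k : ℕ, 0 < k → k < 2 * t + 1 → (k : Fin (2 * t + 1)) ≠ 0 := by
    intro k h1 h2 h
    have h3 := hval k h2
    rw [h] at h3
    simp at h3
    omega
  have h1ne : (1 : Fin (2 * t + 1)) ≠ 0 := by simpa using hnz 1 (by omega) (by omega)
  have h2ne : (2 : Fin (2 * t + 1)) ≠ 0 := by simpa using hnz 2 (by omega) (by omega)
  have h3ne : (3 : Fin (2 * t + 1)) ≠ 0 := by simpa using hnz 3 (by omega) (by omega)
  have hone : ((1 : Fin (2 * t + 1)) : ℕ) = 1 := by simpa using hval 1 (by omega)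
  have hadj : ∀ a b : Fin (2 * t + 1), G.Adj (f a) (f b) ↔ (a ≠ b ∧ a - b ≠ 1 ∧ b - a ≠ 1) := by
    intro a b
    rw [f.map_adj_iff, compl_adj, cycleGraph_adj']
    have e1 : ∀ c : Fin (2 * t + 1), (c : ℕ) = 1 ↔ c = 1 := by
      intro c
      rw [Fin.ext_iff, hone]
    rw [e1, e1]
    tauto
  -- Fin arithmetic facts
  have d20 : i - 2 ≠ i := fun h => h2ne (by linear_combination -h)
  have d21 : i - 2 ≠ i + 1 := fun h => h3ne (by linear_combination -h)
  have d10 : i - 1 ≠ i := fun h => h1ne (by linear_combination -h)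
  have d11 : i - 1 ≠ i + 1 := fun h => h2ne (by linear_combination -h)
  have dii2 : i ≠ i - 2 := fun h => h2ne (by linear_combination h)
  have d12 : i - 2 ≠ i - 1 := fun h => h1ne (by linear_combination -h)
  -- adjacency facts
  have hE1 : G.Adj u (f i) := (hu2 i).2 (Or.inl rfl)
  have hE2 : G.Adj (f i) (f (i - 2)) :=
    (hadj _ _).2 ⟨dii2, fun h => h1ne (by linear_combination h),
      fun h => h3ne (by linear_combination -h)⟩
  have hE3 : G.Adj v (f (i - 2)) := (hv2 (i - 2)).2 (by push_neg; exact ⟨d20, d21⟩)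
  have hE4 : G.Adj v (f (i - 1)) := (hv2 (i - 1)).2 (by push_neg; exact ⟨d10, d11⟩)
  have hN1 : ¬ G.Adj u (f (i - 2)) := fun h => by
    rcases (hu2 _).1 h with h' | h'
    exacts [d20 h', d21 h']
  have hN3 : ¬ G.Adj u (f (i - 1)) := fun h => by
    rcases (hu2 _).1 h with h' | h'
    exacts [d10 h', d11 h']
  have hN4 : ¬ G.Adj v (f i) := fun h => (hv2 i).1 h (Or.inl rfl)
  have hN5 : ¬ G.Adj (f i) (f (i - 1)) := fun h => ((hadj _ _).1 h).2.1 (by ring)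
  have hN6 : ¬ G.Adj (f (i - 2)) (f (i - 1)) := fun h => ((hadj _ _).1 h).2.2 (by ring)
  -- distinctness
  have hufj : ∀ j, u ≠ f j := fun j h => hu ⟨j, h.symm⟩
  have hvfj : ∀ j, v ≠ f j := fun j h => hv ⟨j, h.symm⟩
  have huvne : u ≠ v := fun h => hN4 (h ▸ hE1)
  have finj := f.injective
  -- build a P5
  set w : Fin 5 → V := ![u, f i, f (i - 2), v, f (i - 1)] with hw
  have winj : Function.Injective w := by
    intro a b hab
    fin_cases a <;> fin_cases b <;>
      first
      | rfl
      | (exfalso; revert hab; simp only [hw, Matrix.cons_val_zero, Matrix.cons_val_one,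
          Matrix.head_cons, Matrix.cons_val_two, Matrix.tail_cons, Matrix.cons_val_three,
          Matrix.cons_val_four, Matrix.cons_val_fin_one, Fin.isValue]
         intro hab
         first
         | exact hufj _ hab
         | exact hvfj _ hab
         | exact hufj _ hab.symm
         | exact hvfj _ hab.symm
         | exact huvne hab
         | exact huvne hab.symm
         | exact dii2 (finj hab)
         | exact dii2 (finj hab.symm)
         | exact d10 (finj hab)
         | exact d10 (finj hab.symm)
         | exact d12 (finj hab)
         | exact d12 (finj hab.symm))
  have emb : pathGraph 5 ↪g G := by
    refine ⟨⟨w, winj⟩, ?_⟩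
    intro a b
    fin_cases a <;> fin_cases b <;>
      simp only [hw, Matrix.cons_val_zero, Matrix.cons_val_one, Matrix.head_cons,
        Matrix.cons_val_two, Matrix.tail_cons, Matrix.cons_val_three, Matrix.cons_val_four,
        Matrix.cons_val_fin_one, Fin.isValue] <;>
      first
      | exact iff_of_true hE1 (by rw [pathGraph_adj]; decide)
      | exact iff_of_true hE1.symm (by rw [pathGraph_adj]; decide)
      | exact iff_of_true hE2 (by rw [pathGraph_adj]; decide)
      | exact iff_of_true hE2.symm (by rw [pathGraph_adj]; decide)
      | exact iff_of_true hE3 (by rw [pathGraph_adj]; decide)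
      | exact iff_of_true hE3.symm (by rw [pathGraph_adj]; decide)
      | exact iff_of_true hE4 (by rw [pathGraph_adj]; decide)
      | exact iff_of_true hE4.symm (by rw [pathGraph_adj]; decide)
      | exact iff_of_false huv (by rw [pathGraph_adj]; decide)
      | exact iff_of_false (fun h => huv h.symm) (by rw [pathGraph_adj]; decide)
      | exact iff_of_false hN1 (by rw [pathGraph_adj]; decide)
      | exact iff_of_false (fun h => hN1 h.symm) (by rw [pathGraph_adj]; decide)
      | exact iff_of_false hN3 (by rw [pathGraph_adj]; decide)
      | exact iff_of_false (fun h => hN3 h.symm) (by rw [pathGraph_adj]; decide)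
      | exact iff_of_false hN4 (by rw [pathGraph_adj]; decide)
      | exact iff_of_false (fun h => hN4 h.symm) (by rw [pathGraph_adj]; decide)
      | exact iff_of_false hN5 (by rw [pathGraph_adj]; decide)
      | exact iff_of_false (fun h => hN5 h.symm) (by rw [pathGraph_adj]; decide)
      | exact iff_of_false hN6 (by rw [pathGraph_adj]; decide)
      | exact iff_of_false (fun h => hN6 h.symm) (by rw [pathGraph_adj]; decide)
      | exact iff_of_false G.irrefl (by rw [pathGraph_adj]; decide)
  exact hP5.false emb
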